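/- Let F be a probability distribution on ℝ with right-unbounded support, and let g : ℝ → ℝ be a non-negative nondecreasing function with g(x) → ∞ as x → ∞. Then there exist probability distributions H₁ and H₂ on ℝ such that, for independent random variables ξ₁ with distribution H₁ and ξ₂ with distribution H₂, the random variable min(ξ₁, ξ₂) has distribution F, and E g(ξ₁) = E g(ξ₂) = ∞. -/

import Mathlib

open MeasureTheory ProbabilityTheory Filter

open Set
open scoped ENNReal NNReal

namespace MinHeavyAux

noncomputable def phi (E : Set ℝ) (t : ℝ) : ℝ := (volume (E ∩ Icc 0 t)).toReal

lemma vol_ne_top (E : Set ℝ) (t : ℝ) : volume (E ∩ Icc 0 t) ≠ ⊤ := by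
  refine ne_top_of_le_ne_top ?_ (measure_mono inter_subset_right)
  simp [Real.volume_Icc]

lemma phi_nonneg (E : Set ℝ) (t : ℝ) : 0 ≤ phi E t := ENNReal.toReal_nonneg

lemma phi_mono (E : Set ℝ) : Monotone (phi E) := fun s t hst =>
  ENNReal.toReal_mono (vol_ne_top E t) (measure_mono (inter_subset_inter_right _ (Icc_subset_Icc_right hst)))

lemma phi_zero (E : Set ℝ) {t : ℝ} (ht : t ≤ 0) : phi E t = 0 := by
  have : volume (E ∩ Icc 0 t) = 0 := by
    refine measure_mono_null (inter_subset_right.trans ?_) (by simp : volume ({0} : Set ℝ) = 0)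
    intro x hx
    simp only [mem_Icc] at hx
    simp [le_antisymm (hx.2.trans ht) hx.1]
  simp [phi, this]

lemma phi_lip (E : Set ℝ) {s t : ℝ} (hst : s ≤ t) : phi E t ≤ phi E s + (t - s) := by
  have hsub : E ∩ Icc 0 t ⊆ (E ∩ Icc 0 s) ∪ Icc s t := by
    rintro x ⟨hxE, hx0, hxt⟩
    rcases le_or_gt x s with h | h
    · exact Or.inl ⟨hxE, hx0, h⟩
    · exact Or.inr ⟨h.le, hxt⟩
  have this : volume (E ∩ Icc 0 t) ≤ volume (E ∩ Icc 0 s) + ENNReal.ofReal (t - s) := by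
    refine ((measure_mono hsub).trans (measure_union_le _ _)).trans ?_
    simp [Real.volume_Icc]
  calc phi E t ≤ ((volume (E ∩ Icc 0 s)) + ENNReal.ofReal (t - s)).toReal :=
        ENNReal.toReal_mono (by simp [vol_ne_top]) this
    _ = phi E s + (t - s) := by
        rw [ENNReal.toReal_add (vol_ne_top E s) (by simp)]
        simp [phi, ENNReal.toReal_ofReal (sub_nonneg.2 hst)]

lemma phi_continuous (E : Set ℝ) : Continuous (phi E) := by
  have : LipschitzWith 1 (phi E) := by
    refine LipschitzWith.of_dist_le_mul fun s t => ?_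
    rw [Real.dist_eq, Real.dist_eq, NNReal.coe_one, one_mul]
    rcases le_total s t with h | h
    · rw [abs_sub_comm, abs_of_nonneg (sub_nonneg.2 (phi_mono E h)),
        abs_of_nonpos (sub_nonpos.2 h)]
      linarith [phi_lip E h]
    · rw [abs_of_nonneg (sub_nonneg.2 (phi_mono E h)), abs_of_nonneg (sub_nonneg.2 h)]
      linarith [phi_lip E h]
  exact this.continuous

lemma phi_superadd (E : Set ℝ) (hE : MeasurableSet E) {a b : ℝ} (ha : 0 ≤ a) (hab : a ≤ b)
    (hsub : Ioo a b ⊆ E) : phi E a + (b - a) ≤ phi E b := by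
  have hdisj : Disjoint (E ∩ Icc 0 a) (Ioo a b) := by
    refine Set.disjoint_left.2 ?_
    rintro x ⟨_, _, hxa⟩ ⟨hax, _⟩
    exact absurd hax (not_lt.2 hxa)
  have hsub2 : (E ∩ Icc 0 a) ∪ Ioo a b ⊆ E ∩ Icc 0 b := by
    rintro x (⟨hxE, hx0, hxa⟩ | hx)
    · exact ⟨hxE, hx0, hxa.trans hab⟩
    · exact ⟨hsub hx, ha.trans hx.1.le, hx.2.le⟩
  have this : volume (E ∩ Icc 0 a) + ENNReal.ofReal (b - a) ≤ volume (E ∩ Icc 0 b) := by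
    have h3 : volume (E ∩ Icc 0 a) + volume (Ioo a b) ≤ volume (E ∩ Icc 0 b) := by
      rw [← measure_union hdisj measurableSet_Ioo]
      exact measure_mono hsub2
    simpa [Real.volume_Ioo] using h3
  calc phi E a + (b - a)
      = ((volume (E ∩ Icc 0 a)) + ENNReal.ofReal (b - a)).toReal := by
        rw [ENNReal.toReal_add (vol_ne_top E a) (by simp)]
        simp [phi, ENNReal.toReal_ofReal (sub_nonneg.2 hab)]
    _ ≤ phi E b := ENNReal.toReal_mono (vol_ne_top E b) this


section Seq
variable {c : ℕ → ℝ} (hc0 : c 0 = 0) (hcstep : ∀ k, c k + 1 ≤ c (k + 1))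

noncomputable def E1 (c : ℕ → ℝ) : Set ℝ := ⋃ j : ℕ, Ico (c (2 * j)) (c (2 * j + 1))
noncomputable def E2 (c : ℕ → ℝ) : Set ℝ := ⋃ j : ℕ, Ico (c (2 * j + 1)) (c (2 * j + 2))

lemma E1_meas : MeasurableSet (E1 c) := MeasurableSet.iUnion fun _ => measurableSet_Ico
lemma E2_meas : MeasurableSet (E2 c) := MeasurableSet.iUnion fun _ => measurableSet_Ico

include hcstep in
lemma c_mono : Monotone c :=
  monotone_nat_of_le_succ fun k => by linarith [hcstep k]

include hc0 hcstep in
lemma c_nonneg (k : ℕ) : 0 ≤ c k := hc0 ▸ c_mono hcstep (Nat.zero_le k)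

include hc0 hcstep in
lemma c_ge (k : ℕ) : (k : ℝ) ≤ c k := by
  induction k with
  | zero => simp [hc0]
  | succ n ih => push_cast; linarith [hcstep n]

-- upper bound for phi (E1 c)
include hc0 hcstep in
lemma phi_E1_ub (j : ℕ) {t : ℝ} (ht : t ≤ c (2 * j + 2)) : phi (E1 c) t ≤ c (2 * j + 1) := by
  have hmono := c_mono hcstep
  have hsub : E1 c ∩ Icc 0 t ⊆ Icc 0 (c (2 * j + 1)) ∪ {t} := by
    rintro x ⟨hxE, hx0, hxt⟩
    obtain ⟨i, hxi⟩ := mem_iUnion.1 hxE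
    rcases le_or_gt i j with h | h
    · exact Or.inl ⟨hx0, hxi.2.le.trans (hmono (by omega))⟩
    · have h1 : c (2 * j + 2) ≤ c (2 * i) := hmono (by omega)
      have : x = t := le_antisymm hxt (ht.trans (h1.trans hxi.1))
      exact Or.inr this
  have h2 : volume (E1 c ∩ Icc 0 t) ≤ ENNReal.ofReal (c (2 * j + 1)) := by
    refine ((measure_mono hsub).trans (measure_union_le _ _)).trans ?_
    simp [Real.volume_Icc]
  calc phi (E1 c) t ≤ (ENNReal.ofReal (c (2 * j + 1))).toReal :=
        ENNReal.toReal_mono (by simp) h2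
    _ ≤ c (2 * j + 1) := by rw [ENNReal.toReal_ofReal']; exact max_le le_rfl (c_nonneg hc0 hcstep _)


include hc0 hcstep in
lemma phi_E2_ub (j : ℕ) {t : ℝ} (ht : t ≤ c (2 * j + 1)) : phi (E2 c) t ≤ c (2 * j) := by
  have hmono := c_mono hcstep
  have hsub : E2 c ∩ Icc 0 t ⊆ Icc 0 (c (2 * j)) ∪ {t} := by
    rintro x ⟨hxE, hx0, hxt⟩
    obtain ⟨i, hxi⟩ := mem_iUnion.1 hxE
    rcases lt_or_ge i j with h | h
    · exact Or.inl ⟨hx0, hxi.2.le.trans (hmono (by omega))⟩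
    · have h1 : c (2 * j + 1) ≤ c (2 * i + 1) := hmono (by omega)
      have : x = t := le_antisymm hxt (ht.trans (h1.trans hxi.1))
      exact Or.inr this
  have h2 : volume (E2 c ∩ Icc 0 t) ≤ ENNReal.ofReal (c (2 * j)) := by
    refine ((measure_mono hsub).trans (measure_union_le _ _)).trans ?_
    simp [Real.volume_Icc]
  calc phi (E2 c) t ≤ (ENNReal.ofReal (c (2 * j))).toReal :=
        ENNReal.toReal_mono (by simp) h2
    _ ≤ c (2 * j) := by rw [ENNReal.toReal_ofReal']; exact max_le le_rfl (c_nonneg hc0 hcstep _)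

include hc0 hcstep in
lemma phi_E1_lb (k : ℕ) : (k : ℝ) + 1 ≤ phi (E1 c) (c (2 * k + 1)) := by
  induction k with
  | zero =>
    have hsub : Ioo (c 0) (c 1) ⊆ E1 c := fun x hx =>
      mem_iUnion.2 ⟨0, by simpa using ⟨hx.1.le, hx.2⟩⟩
    have h := phi_superadd (E1 c) E1_meas (c_nonneg hc0 hcstep 0)
      (by linarith [hcstep 0] : c 0 ≤ c 1) hsub
    have := phi_nonneg (E1 c) (c 0)
    have := hcstep 0
    push_cast
    simp only [Nat.mul_zero, Nat.zero_add] at *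
    linarith
  | succ n ih =>
    have hab : c (2 * n + 2) ≤ c (2 * n + 3) := by linarith [hcstep (2 * n + 2)]
    have hsub : Ioo (c (2 * n + 2)) (c (2 * n + 3)) ⊆ E1 c := fun x hx =>
      mem_iUnion.2 ⟨n + 1, by
        rw [(show 2 * (n + 1) = 2 * n + 2 by ring)]
        exact ⟨hx.1.le, hx.2⟩⟩
    have h := phi_superadd (E1 c) E1_meas (c_nonneg hc0 hcstep (2 * n + 2)) hab hsub
    have hm : phi (E1 c) (c (2 * n + 1)) ≤ phi (E1 c) (c (2 * n + 2)) :=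
      phi_mono _ (c_mono hcstep (by omega))
    have heq : 2 * (n + 1) + 1 = 2 * n + 3 := by ring
    rw [heq]
    push_cast
    linarith [hcstep (2 * n + 2)]

include hc0 hcstep in
lemma phi_E2_lb (k : ℕ) : (k : ℝ) + 1 ≤ phi (E2 c) (c (2 * k + 2)) := by
  induction k with
  | zero =>
    have hsub : Ioo (c 1) (c 2) ⊆ E2 c := fun x hx =>
      mem_iUnion.2 ⟨0, by simpa using ⟨hx.1.le, hx.2⟩⟩
    have h := phi_superadd (E2 c) E2_meas (c_nonneg hc0 hcstep 1)
      (by linarith [hcstep 1] : c 1 ≤ c 2) hsub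
    have := phi_nonneg (E2 c) (c 1)
    have := hcstep 1
    push_cast
    linarith
  | succ n ih =>
    have hab : c (2 * n + 3) ≤ c (2 * n + 4) := by linarith [hcstep (2 * n + 3)]
    have hsub : Ioo (c (2 * n + 3)) (c (2 * n + 4)) ⊆ E2 c := fun x hx =>
      mem_iUnion.2 ⟨n + 1, by
        rw [(show 2 * (n + 1) + 1 = 2 * n + 3 by ring), (show 2 * (n + 1) + 2 = 2 * n + 4 by ring)]
        exact ⟨hx.1.le, hx.2⟩⟩
    have h := phi_superadd (E2 c) E2_meas (c_nonneg hc0 hcstep (2 * n + 3)) hab hsub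
    have hm : phi (E2 c) (c (2 * n + 2)) ≤ phi (E2 c) (c (2 * n + 3)) :=
      phi_mono _ (c_mono hcstep (by omega))
    have heq : 2 * (n + 1) + 2 = 2 * n + 4 := by ring
    rw [heq]
    push_cast
    linarith [hcstep (2 * n + 3)]

omit hc0 in
include hcstep in
lemma E_disjoint : Disjoint (E1 c) (E2 c) := by
  have hmono := c_mono hcstep
  refine Set.disjoint_left.2 ?_
  rintro x hx1 hx2
  obtain ⟨i, hxi⟩ := mem_iUnion.1 hx1
  obtain ⟨j, hxj⟩ := mem_iUnion.1 hx2
  rcases le_or_gt i j with h | h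
  · exact absurd (hxi.2.trans_le ((hmono (by omega : 2 * i + 1 ≤ 2 * j + 1)).trans hxj.1)) (lt_irrefl x)
  · exact absurd (hxj.2.trans_le ((hmono (by omega : 2 * j + 2 ≤ 2 * i)).trans hxi.1)) (lt_irrefl x)

include hc0 hcstep in
lemma E_cover {x : ℝ} (hx : 0 ≤ x) : x ∈ E1 c ∪ E2 c := by
  have hmono := c_mono hcstep
  have hub : ∃ k, x < c k := by
    obtain ⟨k, hk⟩ := exists_nat_gt x
    exact ⟨k, hk.trans_le (c_ge hc0 hcstep k)⟩
  classical
  let k := Nat.find hub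
  have hklt : x < c k := Nat.find_spec hub
  have hkpos : k ≠ 0 := by
    intro h
    rw [h, hc0] at hklt
    exact absurd hklt (not_lt.2 hx)
  obtain ⟨m, hm⟩ := Nat.exists_eq_succ_of_ne_zero hkpos
  have hle : c m ≤ x := by
    by_contra hcon
    exact Nat.find_min hub (by omega : m < k) (not_le.1 hcon)
  rw [hm] at hklt
  rcases Nat.even_or_odd m with ⟨j, hj⟩ | ⟨j, hj⟩
  · refine Or.inl (mem_iUnion.2 ⟨j, ?_⟩)
    rw [(show 2 * j = m by omega)]
    exact ⟨hle, hklt⟩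
  · refine Or.inr (mem_iUnion.2 ⟨j, ?_⟩)
    rw [(show 2 * j + 1 = m by omega), (show 2 * j + 2 = m + 1 by omega)]
    exact ⟨hle, hklt⟩

include hc0 hcstep in
lemma phi_sum {t : ℝ} (ht : 0 ≤ t) : phi (E1 c) t + phi (E2 c) t = t := by
  have hdisj : Disjoint (E1 c ∩ Icc 0 t) (E2 c ∩ Icc 0 t) :=
    (E_disjoint hcstep).mono inter_subset_left inter_subset_left
  have hu : volume (E1 c ∩ Icc 0 t) + volume (E2 c ∩ Icc 0 t) = ENNReal.ofReal t := by
    rw [← measure_union hdisj (E2_meas.inter measurableSet_Icc)]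
    have h1 : E1 c ∩ Icc 0 t ∪ E2 c ∩ Icc 0 t = Icc 0 t := by
      apply Subset.antisymm
      · exact union_subset inter_subset_right inter_subset_right
      · intro x hxm
        rcases E_cover hc0 hcstep hxm.1 with h | h
        · exact Or.inl ⟨h, hxm⟩
        · exact Or.inr ⟨h, hxm⟩
    rw [h1]
    simp [Real.volume_Icc, ht]
  have := congrArg ENNReal.toReal hu
  rw [ENNReal.toReal_add (vol_ne_top _ t) (vol_ne_top _ t), ENNReal.toReal_ofReal ht] at this
  exact this

include hc0 hcstep in
lemma phi_E1_tendsto : Tendsto (phi (E1 c)) atTop atTop := by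
  refine tendsto_atTop_atTop_of_monotone (phi_mono _) fun b => ?_
  refine ⟨c (2 * ⌈b⌉₊ + 1), ?_⟩
  calc b ≤ (⌈b⌉₊ : ℝ) := Nat.le_ceil b
    _ ≤ (⌈b⌉₊ : ℝ) + 1 := by linarith
    _ ≤ _ := phi_E1_lb hc0 hcstep _

include hc0 hcstep in
lemma phi_E2_tendsto : Tendsto (phi (E2 c)) atTop atTop := by
  refine tendsto_atTop_atTop_of_monotone (phi_mono _) fun b => ?_
  refine ⟨c (2 * ⌈b⌉₊ + 2), ?_⟩
  calc b ≤ (⌈b⌉₊ : ℝ) := Nat.le_ceil b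
    _ ≤ (⌈b⌉₊ : ℝ) + 1 := by linarith
    _ ≤ _ := phi_E2_lb hc0 hcstep _

end Seq

lemma exists_prob_of_cdf (G : ℝ → ℝ) (hmono : Monotone G)
    (hrc : ∀ x, ContinuousWithinAt G (Ici x) x)
    (h0 : Tendsto G atBot (nhds 0)) (h1 : Tendsto G atTop (nhds 1)) :
    ∃ H : Measure ℝ, IsProbabilityMeasure H ∧ ∀ x, H (Iic x) = ENNReal.ofReal (G x) := by
  let f : StieltjesFunction ℝ := ⟨G, hmono, hrc⟩
  refine ⟨f.measure, f.isProbabilityMeasure h0 h1, fun x => ?_⟩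
  rw [f.measure_Iic h0 x, sub_zero]

lemma prob_Ioi_eq {H : Measure ℝ} [IsProbabilityMeasure H] {G T : ℝ → ℝ}
    (hIic : ∀ x, H (Iic x) = ENNReal.ofReal (G x)) (hGT : ∀ x, G x = 1 - T x)
    (hT0 : ∀ x, 0 ≤ T x) (hT1 : ∀ x, T x ≤ 1) (x : ℝ) :
    H (Ioi x) = ENNReal.ofReal (T x) := by
  have hc : H (Ioi x) = 1 - H (Iic x) := by
    rw [← Set.compl_Iic]
    exact prob_compl_eq_one_sub measurableSet_Iic
  rw [hc, hIic x, hGT x]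
  have : ENNReal.ofReal (1 - T x) + ENNReal.ofReal (T x) = 1 := by
    rw [← ENNReal.ofReal_add (by linarith [hT1 x]) (hT0 x)]
    norm_num
  exact (ENNReal.eq_sub_of_add_eq ENNReal.ofReal_ne_top (by rw [add_comm]; exact this)).symm

lemma one_sub_ofReal {a : ℝ} (h0 : 0 ≤ a) (h1 : a ≤ 1) :
    1 - ENNReal.ofReal (1 - a) = ENNReal.ofReal a := by
  have : ENNReal.ofReal (1 - a) + ENNReal.ofReal a = 1 := by
    rw [← ENNReal.ofReal_add (by linarith) h0]
    norm_num
  exact (ENNReal.eq_sub_of_add_eq ENNReal.ofReal_ne_top (by rw [add_comm]; exact this)).symm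

end MinHeavyAux

open MinHeavyAux

/-- Let `F` be a probability distribution on `ℝ` with right-unbounded
support (its CDF satisfies `F(x) < 1` for all `x`), and let `g : ℝ → ℝ` be a non-negative
nondecreasing function with `g(x) → ∞` as `x → ∞`. Then there exist probability
distributions `H₁` and `H₂` on `ℝ` such that, whenever `ξ₁` and `ξ₂` are independent random
variables with distributions `H₁` and `H₂`, the random variable `min (ξ₁, ξ₂)` has
distribution `F` and `E g(ξ₁) = E g(ξ₂) = ∞`. -/
theorem min_of_two_with_heavy_g_moment
    (F : Measure ℝ) [IsProbabilityMeasure F]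
    (hF : ∀ x : ℝ, F (Set.Iic x) < 1)
    (g : ℝ → ℝ) (hg_nonneg : ∀ x, 0 ≤ g x) (hg_mono : Monotone g)
    (hg_tendsto : Tendsto g atTop atTop) :
    ∃ H₁ H₂ : Measure ℝ, IsProbabilityMeasure H₁ ∧ IsProbabilityMeasure H₂ ∧
      ∀ (Ω : Type) (mΩ : MeasurableSpace Ω) (μ : Measure Ω), IsProbabilityMeasure μ →
        ∀ ξ₁ ξ₂ : Ω → ℝ, Measurable ξ₁ → Measurable ξ₂ →
          μ.map ξ₁ = H₁ → μ.map ξ₂ = H₂ → IndepFun ξ₁ ξ₂ μ →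
          μ.map (fun ω => min (ξ₁ ω) (ξ₂ ω)) = F ∧
          ∫⁻ ω, ENNReal.ofReal (g (ξ₁ ω)) ∂μ = ⊤ ∧
          ∫⁻ ω, ENNReal.ofReal (g (ξ₂ ω)) ∂μ = ⊤ := by
  classical
  have hex : ∀ M : ℝ, ∃ zz : ℝ, M ≤ g zz := fun M =>
    (hg_tendsto.eventually (eventually_ge_atTop M)).exists
  choose zf hzf using hex
  -- basic facts about the cdf and tail of F
  have hΦ0 : ∀ x, 0 ≤ cdf F x := fun x => cdf_nonneg F x
  have hΦ1 : ∀ x, cdf F x ≤ 1 := fun x => cdf_le_one F x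
  have hΦlt : ∀ x, cdf F x < 1 := by
    intro x
    rw [cdf_eq_real]
    calc (F (Set.Iic x)).toReal < (1 : ℝ≥0∞).toReal :=
          ENNReal.toReal_strict_mono (by simp) (hF x)
      _ = 1 := by simp
  set T : ℝ → ℝ := fun x => 1 - cdf F x with hTdef
  have hT_pos : ∀ x, 0 < T x := fun x => by simp only [hTdef]; linarith [hΦlt x]
  have hT_le1 : ∀ x, T x ≤ 1 := fun x => by simp only [hTdef]; linarith [hΦ0 x]
  set v : ℝ → ℝ := fun x => -Real.log (T x) with hvdef
  have hv_nonneg : ∀ x, 0 ≤ v x := fun x => by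
    simp only [hvdef]
    have := Real.log_nonpos (hT_pos x).le (hT_le1 x)
    linarith
  have hv_mono : Monotone v := by
    intro x y hxy
    simp only [hvdef, neg_le_neg_iff]
    exact Real.log_le_log (hT_pos y) (by simp only [hTdef]; linarith [monotone_cdf F hxy])
  have hexp_v : ∀ x, Real.exp (-(v x)) = T x := fun x => by
    simp only [hvdef, neg_neg]
    exact Real.exp_log (hT_pos x)
  -- recursive construction of the cut points
  have hcex : ∃ c : ℕ → ℝ, c 0 = 0 ∧ (∀ k, c k + 1 ≤ c (k + 1)) ∧
      ∀ k, ∃ y : ℝ, v y ≤ c (k + 1) ∧ ((k : ℝ) + 2) * Real.exp (c k) ≤ g y := by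
    let cf : ℕ → ℝ := fun n =>
      Nat.rec 0 (fun k ck => max (v (zf (((k : ℝ) + 2) * Real.exp ck))) (ck + 1)) n
    have hsucc : ∀ k, cf (k + 1) = max (v (zf (((k : ℝ) + 2) * Real.exp (cf k)))) (cf k + 1) :=
      fun k => rfl
    refine ⟨cf, rfl, fun k => ?_, fun k => ⟨zf (((k : ℝ) + 2) * Real.exp (cf k)), ?_, hzf _⟩⟩
    · rw [hsucc]; exact le_max_right _ _
    · rw [hsucc]; exact le_max_left _ _
  obtain ⟨c, hc0, hcstep, hcy⟩ := hcex
  choose z hvz hgz using hcy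
  -- the two tail functions
  set T₁ : ℝ → ℝ := fun x => Real.exp (-(phi (E1 c) (v x))) with hT₁def
  set T₂ : ℝ → ℝ := fun x => Real.exp (-(phi (E2 c) (v x))) with hT₂def
  have hT₁_pos : ∀ x, 0 < T₁ x := fun x => Real.exp_pos _
  have hT₂_pos : ∀ x, 0 < T₂ x := fun x => Real.exp_pos _
  have hT₁_le1 : ∀ x, T₁ x ≤ 1 := fun x =>
    Real.exp_le_one_iff.2 (neg_nonpos.2 (phi_nonneg _ _))
  have hT₂_le1 : ∀ x, T₂ x ≤ 1 := fun x =>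
    Real.exp_le_one_iff.2 (neg_nonpos.2 (phi_nonneg _ _))
  have hT₁T₂ : ∀ x, T₁ x * T₂ x = T x := by
    intro x
    simp only [hT₁def, hT₂def]
    rw [← Real.exp_add, (show -(phi (E1 c) (v x)) + -(phi (E2 c) (v x))
        = -(phi (E1 c) (v x) + phi (E2 c) (v x)) by ring),
      phi_sum hc0 hcstep (hv_nonneg x), hexp_v x]
  -- right continuity of v
  have hv_rc : ∀ x, ContinuousWithinAt v (Ici x) x := by
    intro x
    have houter : ContinuousAt (fun t : ℝ => -Real.log (1 - t)) (cdf F x) := by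
      have h1 : ContinuousAt (fun t : ℝ => (1 : ℝ) - t) (cdf F x) :=
        (continuous_const.sub continuous_id).continuousAt
      have h2 : ContinuousAt Real.log (1 - cdf F x) :=
        Real.continuousAt_log (by linarith [hΦlt x])
      exact (h2.comp h1).neg
    exact houter.comp_continuousWithinAt ((cdf F).right_continuous x)
  -- monotonicity and right continuity of the candidate cdfs
  have hG₁_mono : Monotone (fun x => 1 - T₁ x) := by
    intro x y hxy
    simp only [hT₁def, sub_le_sub_iff_left]
    exact Real.exp_le_exp.2 (neg_le_neg (phi_mono _ (hv_mono hxy)))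
  have hG₂_mono : Monotone (fun x => 1 - T₂ x) := by
    intro x y hxy
    simp only [hT₂def, sub_le_sub_iff_left]
    exact Real.exp_le_exp.2 (neg_le_neg (phi_mono _ (hv_mono hxy)))
  have houter₁ : Continuous (fun t : ℝ => 1 - Real.exp (-(phi (E1 c) t))) :=
    continuous_const.sub (Real.continuous_exp.comp (phi_continuous _).neg)
  have houter₂ : Continuous (fun t : ℝ => 1 - Real.exp (-(phi (E2 c) t))) :=
    continuous_const.sub (Real.continuous_exp.comp (phi_continuous _).neg)
  have hG₁_rc : ∀ x, ContinuousWithinAt (fun x => 1 - T₁ x) (Ici x) x := fun x =>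
    houter₁.continuousAt.comp_continuousWithinAt (hv_rc x)
  have hG₂_rc : ∀ x, ContinuousWithinAt (fun x => 1 - T₂ x) (Ici x) x := fun x =>
    houter₂.continuousAt.comp_continuousWithinAt (hv_rc x)
  -- limits at -∞
  have hv_bot : Tendsto v atBot (nhds 0) := by
    have houter : ContinuousAt (fun t : ℝ => -Real.log (1 - t)) 0 := by
      have h2 : ContinuousAt Real.log ((1 : ℝ) - 0) := Real.continuousAt_log (by norm_num)
      exact (h2.comp ((continuous_const.sub continuous_id).continuousAt)).neg
    have := houter.tendsto.comp (tendsto_cdf_atBot F)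
    simpa [Function.comp_def, hvdef, hTdef] using this
  have hG₁_bot : Tendsto (fun x => 1 - T₁ x) atBot (nhds 0) := by
    have := houter₁.continuousAt (x := 0) |>.tendsto.comp hv_bot
    simpa [phi_zero _ le_rfl, Function.comp_def, hT₁def] using this
  have hG₂_bot : Tendsto (fun x => 1 - T₂ x) atBot (nhds 0) := by
    have := houter₂.continuousAt (x := 0) |>.tendsto.comp hv_bot
    simpa [phi_zero _ le_rfl, Function.comp_def, hT₂def] using this
  -- limits at +∞
  have hv_top : Tendsto v atTop atTop := by
    have hT_top : Tendsto T atTop (nhds 0) := by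
      have := (tendsto_cdf_atTop F).const_sub 1
      simpa [hTdef] using this
    have h1 : Tendsto T atTop (nhdsWithin 0 (Ioi 0)) :=
      tendsto_nhdsWithin_of_tendsto_nhds_of_eventually_within _ hT_top
        (Eventually.of_forall fun x => hT_pos x)
    have h2 : Tendsto (fun x => Real.log (T x)) atTop atBot :=
      Real.tendsto_log_nhdsGT_zero.comp h1
    rw [hvdef]
    exact tendsto_neg_atBot_atTop.comp h2
  have hG₁_top : Tendsto (fun x => 1 - T₁ x) atTop (nhds 1) := by
    have h1 : Tendsto (fun x => phi (E1 c) (v x)) atTop atTop :=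
      (phi_E1_tendsto hc0 hcstep).comp hv_top
    have h2 : Tendsto (fun x => Real.exp (-(phi (E1 c) (v x)))) atTop (nhds 0) :=
      Real.tendsto_exp_neg_atTop_nhds_zero.comp h1
    have := tendsto_const_nhds (α := ℝ) (x := (1:ℝ)) (f := atTop) |>.sub h2
    simpa using this
  have hG₂_top : Tendsto (fun x => 1 - T₂ x) atTop (nhds 1) := by
    have h1 : Tendsto (fun x => phi (E2 c) (v x)) atTop atTop :=
      (phi_E2_tendsto hc0 hcstep).comp hv_top
    have h2 : Tendsto (fun x => Real.exp (-(phi (E2 c) (v x)))) atTop (nhds 0) :=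
      Real.tendsto_exp_neg_atTop_nhds_zero.comp h1
    have := tendsto_const_nhds (α := ℝ) (x := (1:ℝ)) (f := atTop) |>.sub h2
    simpa using this
  -- the two measures
  obtain ⟨H₁, hH₁prob, hH₁Iic⟩ := exists_prob_of_cdf _ hG₁_mono hG₁_rc hG₁_bot hG₁_top
  obtain ⟨H₂, hH₂prob, hH₂Iic⟩ := exists_prob_of_cdf _ hG₂_mono hG₂_rc hG₂_bot hG₂_top
  haveI := hH₁prob; haveI := hH₂prob
  have hH₁Ioi : ∀ x, H₁ (Ioi x) = ENNReal.ofReal (T₁ x) :=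
    prob_Ioi_eq hH₁Iic (fun _ => rfl) (fun x => (hT₁_pos x).le) hT₁_le1
  have hH₂Ioi : ∀ x, H₂ (Ioi x) = ENNReal.ofReal (T₂ x) :=
    prob_Ioi_eq hH₂Iic (fun _ => rfl) (fun x => (hT₂_pos x).le) hT₂_le1
  refine ⟨H₁, H₂, hH₁prob, hH₂prob, ?_⟩
  intro Ω mΩ μ hμ ξ₁ ξ₂ hm₁ hm₂ hmap₁ hmap₂ hind
  haveI := hμ
  have e₁ : ∀ x, μ (ξ₁ ⁻¹' Ioi x) = ENNReal.ofReal (T₁ x) := fun x => by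
    rw [← Measure.map_apply hm₁ measurableSet_Ioi, hmap₁]; exact hH₁Ioi x
  have e₂ : ∀ x, μ (ξ₂ ⁻¹' Ioi x) = ENNReal.ofReal (T₂ x) := fun x => by
    rw [← Measure.map_apply hm₂ measurableSet_Ioi, hmap₂]; exact hH₂Ioi x
  refine ⟨?_, ?_, ?_⟩
  · -- the minimum has distribution F
    haveI : IsProbabilityMeasure (μ.map (fun ω => min (ξ₁ ω) (ξ₂ ω))) :=
      Measure.isProbabilityMeasure_map ((hm₁.min hm₂).aemeasurable)
    refine Measure.ext_of_Iic _ _ (fun x => ?_)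
    rw [Measure.map_apply (hm₁.min hm₂) measurableSet_Iic]
    have hpre : (fun ω => min (ξ₁ ω) (ξ₂ ω)) ⁻¹' (Iic x)
        = (ξ₁ ⁻¹' (Ioi x) ∩ ξ₂ ⁻¹' (Ioi x))ᶜ := by
      ext ω
      simp only [mem_preimage, mem_Iic, min_le_iff, mem_compl_iff, mem_inter_iff, mem_Ioi,
        not_and_or, not_lt]
    rw [hpre, prob_compl_eq_one_sub ((hm₁ measurableSet_Ioi).inter (hm₂ measurableSet_Ioi)),
      hind.measure_inter_preimage_eq_mul _ _ measurableSet_Ioi measurableSet_Ioi,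
      e₁ x, e₂ x, ← ENNReal.ofReal_mul (hT₁_pos x).le, hT₁T₂ x]
    rw [hTdef]
    rw [one_sub_ofReal (hΦ0 x) (hΦ1 x), ofReal_cdf]
  · -- infinite g-moment for ξ₁
    by_contra hne
    obtain ⟨n, hn⟩ := ENNReal.exists_nat_gt hne
    set y := z (2 * n + 1) with hydef
    have hphi : phi (E1 c) (v y) ≤ c (2 * n + 1) :=
      phi_E1_ub hc0 hcstep n (by exact hvz (2 * n + 1))
    have hgy : ((2 * n + 1 : ℕ) : ℝ) + 2 ≤ g y * T₁ y := by
      have h2 : (((2 * n + 1 : ℕ) : ℝ) + 2) * Real.exp (c (2 * n + 1))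
          * Real.exp (-(c (2 * n + 1))) ≤ g y * T₁ y := by
        refine mul_le_mul (hgz (2 * n + 1)) ?_ (Real.exp_pos _).le (hg_nonneg y)
        simp only [hT₁def]
        exact Real.exp_le_exp.2 (neg_le_neg hphi)
      rw [mul_assoc, ← Real.exp_add] at h2
      simpa using h2
    have hkey : (n : ℝ≥0∞) ≤ ∫⁻ ω, ENNReal.ofReal (g (ξ₁ ω)) ∂μ := by
      have hint : ENNReal.ofReal (g y) * μ (ξ₁ ⁻¹' Ioi y)
          ≤ ∫⁻ ω, ENNReal.ofReal (g (ξ₁ ω)) ∂μ := by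
        rw [← lintegral_indicator_const (hm₁ measurableSet_Ioi)]
        refine lintegral_mono fun ω => ?_
        by_cases hω : ω ∈ ξ₁ ⁻¹' Ioi y
        · rw [indicator_of_mem hω]
          exact ENNReal.ofReal_le_ofReal (hg_mono (le_of_lt hω))
        · rw [indicator_of_notMem hω]; exact zero_le
      refine le_trans ?_ hint
      rw [e₁ y, ← ENNReal.ofReal_mul (hg_nonneg y), ← ENNReal.ofReal_natCast n]
      refine ENNReal.ofReal_le_ofReal ?_
      push_cast at hgy ⊢
      linarith
    exact absurd (hkey.trans_lt hn) (lt_irrefl _)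
  · -- infinite g-moment for ξ₂
    by_contra hne
    obtain ⟨n, hn⟩ := ENNReal.exists_nat_gt hne
    set y := z (2 * n + 2) with hydef
    have hphi : phi (E2 c) (v y) ≤ c (2 * (n + 1)) := by
      refine phi_E2_ub hc0 hcstep (n + 1) ?_
      rw [(show 2 * (n + 1) + 1 = 2 * n + 2 + 1 by ring)]
      exact hvz (2 * n + 2)
    have hphi' : phi (E2 c) (v y) ≤ c (2 * n + 2) := by
      rw [(show 2 * n + 2 = 2 * (n + 1) by ring)]
      exact hphi
    have hgy : ((2 * n + 2 : ℕ) : ℝ) + 2 ≤ g y * T₂ y := by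
      have h2 : (((2 * n + 2 : ℕ) : ℝ) + 2) * Real.exp (c (2 * n + 2))
          * Real.exp (-(c (2 * n + 2))) ≤ g y * T₂ y := by
        refine mul_le_mul (hgz (2 * n + 2)) ?_ (Real.exp_pos _).le (hg_nonneg y)
        simp only [hT₂def]
        exact Real.exp_le_exp.2 (neg_le_neg hphi')
      rw [mul_assoc, ← Real.exp_add] at h2
      simpa using h2
    have hkey : (n : ℝ≥0∞) ≤ ∫⁻ ω, ENNReal.ofReal (g (ξ₂ ω)) ∂μ := by
      have hint : ENNReal.ofReal (g y) * μ (ξ₂ ⁻¹' Ioi y)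
          ≤ ∫⁻ ω, ENNReal.ofReal (g (ξ₂ ω)) ∂μ := by
        rw [← lintegral_indicator_const (hm₂ measurableSet_Ioi)]
        refine lintegral_mono fun ω => ?_
        by_cases hω : ω ∈ ξ₂ ⁻¹' Ioi y
        · rw [indicator_of_mem hω]
          exact ENNReal.ofReal_le_ofReal (hg_mono (le_of_lt hω))
        · rw [indicator_of_notMem hω]; exact zero_le
      refine le_trans ?_ hint
      rw [e₂ y, ← ENNReal.ofReal_mul (hg_nonneg y), ← ENNReal.ofReal_natCast n]
      refine ENNReal.ofReal_le_ofReal ?_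
      push_cast at hgy ⊢
      linarith
    exact absurd (hkey.trans_lt hn) (lt_irrefl _)
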